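/- For every positive integer n and every rational (or real) y that is not zero and not equal to -j for any 1 ≤ j ≤ n, sum_{k=0}^n (-1)^k * binom(n,k) * binom(n+k,k) / (k + y) = ((-1)^n / y) * prod_{j=1}^n (y - j)/(y + j). -/

import Mathlib

open Finset Polynomial

private lemma castfac (k : ℕ) :
    ∏ j ∈ Finset.range k, ((j : ℚ) + 1) = (Nat.factorial k : ℚ) := by
  rw [← Finset.prod_range_add_one_eq_factorial k]
  push_cast
  rfl

private lemma prodA (k : ℕ) :
    ∏ j ∈ Finset.range k, ((j : ℚ) - k) = (-1) ^ k * (Nat.factorial k : ℚ) := by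
  rw [← Finset.prod_range_reflect (fun j => ((j : ℚ) - k)) k]
  have h : ∀ j ∈ Finset.range k, ((k - 1 - j : ℕ) : ℚ) - k = (-1) * ((j : ℚ) + 1) := by
    intro j hj
    rw [Finset.mem_range] at hj
    have h1 : (k - 1 - j : ℕ) = k - (j + 1) := by omega
    have h2 : j + 1 ≤ k := hj
    rw [h1]
    push_cast [h2]
    ring
  rw [Finset.prod_congr rfl h, Finset.prod_mul_distrib, Finset.prod_const, castfac,
    Finset.card_range]

private lemma prodB {k n : ℕ} (hk : k ≤ n) :
    ∏ j ∈ Finset.Ico (k + 1) (n + 1), ((j : ℚ) - k) = (Nat.factorial (n - k) : ℚ) := by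
  rw [Finset.prod_Ico_eq_prod_range]
  have h : ∀ j ∈ Finset.range (n + 1 - (k + 1)), (((k + 1 + j : ℕ) : ℚ)) - k
      = ((j : ℚ) + 1) := by
    intro j _
    push_cast
    ring
  rw [Finset.prod_congr rfl h]
  have h2 : n + 1 - (k + 1) = n - k := by omega
  rw [h2, castfac]

private lemma prodC (k : ℕ) : ∀ n : ℕ,
    ∏ j ∈ Finset.Icc 1 n, ((k : ℚ) + j)
      = (Nat.factorial (n + k) : ℚ) / (Nat.factorial k : ℚ)
  | 0 => by
    simp only [Finset.Icc_self, Nat.zero_add, Finset.Icc_eq_empty_of_lt (by omega : (0:ℕ) < 1)]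
    rw [Finset.prod_empty, eq_comm, div_self (Nat.cast_ne_zero.mpr (Nat.factorial_ne_zero k))]
  | n + 1 => by
    have hk : (Nat.factorial k : ℚ) ≠ 0 := Nat.cast_ne_zero.mpr (Nat.factorial_ne_zero k)
    rw [Finset.prod_Icc_succ_top (by omega), prodC k n]
    have hfac : (Nat.factorial (n + 1 + k) : ℚ)
        = ((n + k : ℕ) + 1) * (Nat.factorial (n + k) : ℚ) := by
      rw [show n + 1 + k = (n + k) + 1 by ring, Nat.factorial_succ]
      push_cast
      ring
    rw [hfac]
    field_simp
    push_cast
    ring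

private lemma natfact {n k : ℕ} (hk : k ≤ n) :
    n.choose k * ((n + k).choose k) * Nat.factorial k * Nat.factorial (n - k) *
      Nat.factorial k = Nat.factorial (n + k) := by
  have h1 := Nat.choose_mul_factorial_mul_factorial hk
  have h2 := Nat.choose_mul_factorial_mul_factorial (Nat.le_add_left k n)
  rw [Nat.add_sub_cancel] at h2
  calc n.choose k * ((n + k).choose k) * Nat.factorial k * Nat.factorial (n - k) *
        Nat.factorial k
      = ((n + k).choose k * Nat.factorial k) *
          (n.choose k * Nat.factorial k * Nat.factorial (n - k)) := by ring
    _ = (n + k).choose k * Nat.factorial k * Nat.factorial n := by rw [h1]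
    _ = Nat.factorial (n + k) := h2

private lemma keyPoly (n : ℕ) :
    (∑ k ∈ Finset.range (n + 1), C ((-1 : ℚ) ^ k * (n.choose k : ℚ) * ((n + k).choose k : ℚ)) *
        ∏ j ∈ (Finset.range (n + 1)).erase k, (X + C (j : ℚ)))
      = C ((-1 : ℚ) ^ n) * ∏ j ∈ Finset.Icc 1 n, (X - C (j : ℚ)) := by
  set P : ℚ[X] := ∑ k ∈ Finset.range (n + 1),
    C ((-1 : ℚ) ^ k * (n.choose k : ℚ) * ((n + k).choose k : ℚ)) *
      ∏ j ∈ (Finset.range (n + 1)).erase k, (X + C (j : ℚ)) with hPdef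
  set Q : ℚ[X] := C ((-1 : ℚ) ^ n) * ∏ j ∈ Finset.Icc 1 n, (X - C (j : ℚ)) with hQdef
  have key : P - Q = 0 := by
    apply Polynomial.eq_zero_of_natDegree_lt_card_of_eval_eq_zero' _
      ((Finset.range (n + 1)).image (fun k : ℕ => -(k : ℚ)))
    · intro x hx
      simp only [Finset.mem_image, Finset.mem_range] at hx
      obtain ⟨k, hk, rfl⟩ := hx
      have hkn : k ≤ n := by omega
      rw [eval_sub, sub_eq_zero]
      have hevalP : eval (-(k : ℚ)) P =
          (-1 : ℚ) ^ k * (n.choose k : ℚ) * ((n + k).choose k : ℚ) *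
            ∏ j ∈ (Finset.range (n + 1)).erase k, (-(k : ℚ) + (j : ℚ)) := by
        rw [hPdef, eval_finset_sum]
        rw [Finset.sum_eq_single_of_mem k (Finset.mem_range.mpr hk)]
        · simp [eval_prod]
        · intro b hb hbk
          have hkmem : k ∈ (Finset.range (n + 1)).erase b :=
            Finset.mem_erase.mpr ⟨fun h => hbk h.symm, Finset.mem_range.mpr hk⟩
          rw [eval_mul, eval_prod]
          rw [Finset.prod_eq_zero hkmem (by simp)]
          simp
      have hprod : ∏ j ∈ (Finset.range (n + 1)).erase k, (-(k : ℚ) + (j : ℚ))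
          = (-1) ^ k * (Nat.factorial k : ℚ) * (Nat.factorial (n - k) : ℚ) := by
        have hset : (Finset.range (n + 1)).erase k
            = Finset.range k ∪ Finset.Ico (k + 1) (n + 1) := by
          ext j
          simp only [Finset.mem_erase, Finset.mem_range, Finset.mem_union, Finset.mem_Ico]
          omega
        have hdisj : Disjoint (Finset.range k) (Finset.Ico (k + 1) (n + 1)) := by
          rw [Finset.disjoint_left]
          intro a ha hb
          rw [Finset.mem_range] at ha
          rw [Finset.mem_Ico] at hb
          omega
        rw [hset, Finset.prod_union hdisj]
        have h1 : ∀ j : ℕ, -(k : ℚ) + (j : ℚ) = (j : ℚ) - k := by intro j; ring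
        simp only [h1]
        rw [prodA k, prodB hkn]
      have hevalQ : eval (-(k : ℚ)) Q
          = (Nat.factorial (n + k) : ℚ) / (Nat.factorial k : ℚ) := by
        rw [hQdef, eval_mul, eval_C, eval_prod]
        simp only [eval_sub, eval_X, eval_C]
        have h1 : ∀ j ∈ Finset.Icc 1 n, -(k : ℚ) - (j : ℚ) = (-1) * ((k : ℚ) + j) := by
          intro j _; ring
        rw [Finset.prod_congr rfl h1, Finset.prod_mul_distrib, Finset.prod_const,
          Nat.card_Icc, prodC k n]
        have hpow : (-1 : ℚ) ^ n * (-1 : ℚ) ^ (n + 1 - 1) = 1 := by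
          rw [Nat.add_sub_cancel, ← mul_pow]
          norm_num
        rw [← mul_assoc, hpow, one_mul]
      rw [hevalP, hprod, hevalQ]
      have hkfac : (Nat.factorial k : ℚ) ≠ 0 := Nat.cast_ne_zero.mpr (Nat.factorial_ne_zero k)
      rw [eq_div_iff hkfac]
      have hpow : (-1 : ℚ) ^ k * (-1 : ℚ) ^ k = 1 := by rw [← mul_pow]; norm_num
      calc (-1 : ℚ) ^ k * (n.choose k : ℚ) * ((n + k).choose k : ℚ) *
            ((-1) ^ k * (Nat.factorial k : ℚ) * (Nat.factorial (n - k) : ℚ)) *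
              (Nat.factorial k : ℚ)
          = ((-1 : ℚ) ^ k * (-1 : ℚ) ^ k) *
              ((n.choose k : ℚ) * ((n + k).choose k : ℚ) * (Nat.factorial k : ℚ) *
                (Nat.factorial (n - k) : ℚ) * (Nat.factorial k : ℚ)) := by ring
        _ = (n.choose k : ℚ) * ((n + k).choose k : ℚ) * (Nat.factorial k : ℚ) *
              (Nat.factorial (n - k) : ℚ) * (Nat.factorial k : ℚ) := by rw [hpow, one_mul]
        _ = (Nat.factorial (n + k) : ℚ) := by exact_mod_cast congrArg Nat.cast (natfact hkn)
    · have hinj : Function.Injective (fun k : ℕ => -(k : ℚ)) := by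
        intro a b h
        simp only [neg_inj, Nat.cast_inj] at h
        exact h
      rw [Finset.card_image_of_injective _ hinj, Finset.card_range]
      have hP : P.natDegree ≤ n := by
        apply Polynomial.natDegree_sum_le_of_forall_le
        intro k hk
        refine le_trans (Polynomial.natDegree_C_mul_le _ _) ?_
        refine le_trans (Polynomial.natDegree_prod_le _ _) ?_
        calc ∑ j ∈ (Finset.range (n + 1)).erase k, (X + C (j : ℚ)).natDegree
            = ∑ j ∈ (Finset.range (n + 1)).erase k, 1 := by
              apply Finset.sum_congr rfl
              intro j _
              exact Polynomial.natDegree_X_add_C _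
          _ = ((Finset.range (n + 1)).erase k).card := by
              rw [Finset.sum_const, smul_eq_mul, mul_one]
          _ ≤ n := by rw [Finset.card_erase_of_mem hk, Finset.card_range]; omega
      have hQ : Q.natDegree ≤ n := by
        refine le_trans (Polynomial.natDegree_C_mul_le _ _) ?_
        refine le_trans (Polynomial.natDegree_prod_le _ _) ?_
        calc ∑ j ∈ Finset.Icc 1 n, (X - C (j : ℚ)).natDegree
            = ∑ j ∈ Finset.Icc 1 n, 1 := by
              apply Finset.sum_congr rfl
              intro j _
              exact Polynomial.natDegree_X_sub_C _
          _ ≤ n := by rw [Finset.sum_const, smul_eq_mul, mul_one, Nat.card_Icc]; omega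
      calc (P - Q).natDegree ≤ max P.natDegree Q.natDegree := Polynomial.natDegree_sub_le P Q
        _ ≤ n := max_le hP hQ
        _ < n + 1 := Nat.lt_succ_self n
  exact sub_eq_zero.mp key

/-- Mortenson's identity: for y ≠ 0, y ≠ -j (1 ≤ j ≤ n),
∑_{k=0}^n (-1)^k C(n,k) C(n+k,k)/(k+y) = ((-1)^n/y) ∏_{j=1}^n (y-j)/(y+j). -/
theorem mortenson_identity (n : ℕ) (hn : 0 < n) (y : ℚ) (hy : y ≠ 0)
    (hy' : ∀ j ∈ Finset.Icc 1 n, y ≠ -(j : ℚ)) :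
    ∑ k ∈ Finset.range (n + 1),
        (-1 : ℚ) ^ k * (Nat.choose n k : ℚ) * (Nat.choose (n + k) k : ℚ) / ((k : ℚ) + y) =
      ((-1 : ℚ) ^ n / y) * ∏ j ∈ Finset.Icc 1 n, (y - (j : ℚ)) / (y + (j : ℚ)) := by
  have hDj : ∀ j ∈ Finset.range (n + 1), y + (j : ℚ) ≠ 0 := by
    intro j hj
    rw [Finset.mem_range] at hj
    rcases Nat.eq_zero_or_pos j with h0 | h1
    · subst h0; simpa using hy
    · have := hy' j (Finset.mem_Icc.mpr ⟨h1, by omega⟩)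
      intro hc
      exact this (by linarith)
  set D : ℚ := ∏ j ∈ Finset.range (n + 1), (y + (j : ℚ)) with hDdef
  have hD : D ≠ 0 := Finset.prod_ne_zero_iff.mpr hDj
  have hE : ∏ j ∈ Finset.Icc 1 n, (y + (j : ℚ)) ≠ 0 := by
    apply Finset.prod_ne_zero_iff.mpr
    intro j hj
    rw [Finset.mem_Icc] at hj
    exact hDj j (Finset.mem_range.mpr (by omega))
  apply mul_right_cancel₀ hD
  have hkey := congrArg (Polynomial.eval y) (keyPoly n)
  rw [Polynomial.eval_finset_sum] at hkey
  simp only [Polynomial.eval_mul, Polynomial.eval_C, Polynomial.eval_prod,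
    Polynomial.eval_add, Polynomial.eval_sub, Polynomial.eval_X] at hkey
  have hL : (∑ k ∈ Finset.range (n + 1),
      (-1 : ℚ) ^ k * (Nat.choose n k : ℚ) * (Nat.choose (n + k) k : ℚ) / ((k : ℚ) + y)) * D
      = ∑ k ∈ Finset.range (n + 1),
        (-1 : ℚ) ^ k * (Nat.choose n k : ℚ) * (Nat.choose (n + k) k : ℚ) *
          ∏ j ∈ (Finset.range (n + 1)).erase k, (y + (j : ℚ)) := by
    rw [Finset.sum_mul]
    apply Finset.sum_congr rfl
    intro k hk
    have hky : (k : ℚ) + y ≠ 0 := by rw [add_comm]; exact hDj k hk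
    rw [hDdef, ← Finset.mul_prod_erase _ _ hk]
    field_simp
    ring
  rw [hL, hkey]
  have hsplit : D = y * ∏ j ∈ Finset.Icc 1 n, (y + (j : ℚ)) := by
    rw [hDdef, Finset.prod_range_succ']
    have h2 : ∏ j ∈ Finset.Icc 1 n, (y + (j : ℚ))
        = ∏ i ∈ Finset.range n, (y + ((i : ℚ) + 1)) := by
      rw [show Finset.Icc 1 n = Finset.Ico 1 (n + 1) by rfl, Finset.prod_Ico_eq_prod_range]
      apply Finset.prod_congr (by congr 1)
      intro i _
      push_cast
      ring
    rw [h2]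
    push_cast
    ring
  rw [hsplit, Finset.prod_div_distrib]
  field_simp
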